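/- (Joint convexity of exponential collision relative entropy) The map (ρ, σ) ↦ exp D₂(ρ‖σ) = tr(σ^{−1/2}ρσ^{−1/2}ρ) is jointly convex on pairs of positive semidefinite matrices with supp ρ ⊆ supp σ: for ρ = Σᵢ pᵢρᵢ and σ = Σᵢ pᵢσᵢ with pᵢ a probability distribution, tr(σ^{−1/2}ρσ^{−1/2}ρ) ≤ Σᵢ pᵢ tr(σᵢ^{−1/2}ρᵢσᵢ^{−1/2}ρᵢ). -/

import Mathlib

open Matrix Kronecker ComplexOrder

/-- Apply a real function to a Hermitian matrix via its spectral decomposition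
(returns 0 on non-Hermitian input). -/
noncomputable def hermFun {n : Type*} [Fintype n] [DecidableEq n]
    (f : ℝ → ℝ) (A : Matrix n n ℂ) : Matrix n n ℂ :=
  if hA : A.IsHermitian then
    (hA.eigenvectorUnitary : Matrix n n ℂ) *
      Matrix.diagonal (fun i => (f (hA.eigenvalues i) : ℂ)) *
      (hA.eigenvectorUnitary : Matrix n n ℂ)ᴴ
  else 0

/-- Inverse square root of a positive semidefinite matrix, taken on its support. -/
noncomputable def pinvSqrt {n : Type*} [Fintype n] [DecidableEq n]
    (A : Matrix n n ℂ) : Matrix n n ℂ :=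
  hermFun (fun x => if x ≤ 0 then 0 else (Real.sqrt x)⁻¹) A

section HermFun
variable {m : Type*} [Fintype m] [DecidableEq m] {A : Matrix m m ℂ}

lemma hermFun_def (hA : A.IsHermitian) (f : ℝ → ℝ) :
    hermFun f A = (hA.eigenvectorUnitary : Matrix m m ℂ) *
      Matrix.diagonal (fun i => (f (hA.eigenvalues i) : ℂ)) *
      (hA.eigenvectorUnitary : Matrix m m ℂ)ᴴ := dif_pos hA

lemma eigUnit_mul_star (hA : A.IsHermitian) :
    (hA.eigenvectorUnitary : Matrix m m ℂ) * (hA.eigenvectorUnitary : Matrix m m ℂ)ᴴ = 1 := by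
  rw [← Matrix.star_eq_conjTranspose]
  exact (Matrix.mem_unitaryGroup_iff).mp hA.eigenvectorUnitary.2

lemma star_mul_eigUnit (hA : A.IsHermitian) :
    (hA.eigenvectorUnitary : Matrix m m ℂ)ᴴ * (hA.eigenvectorUnitary : Matrix m m ℂ) = 1 := by
  rw [← Matrix.star_eq_conjTranspose]
  exact (Matrix.mem_unitaryGroup_iff').mp hA.eigenvectorUnitary.2

lemma hermFun_mul (hA : A.IsHermitian) (f g : ℝ → ℝ) :
    hermFun f A * hermFun g A = hermFun (fun x => f x * g x) A := by
  rw [hermFun_def hA, hermFun_def hA, hermFun_def hA]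
  set U := (hA.eigenvectorUnitary : Matrix m m ℂ)
  calc U * diagonal (fun i => (f (hA.eigenvalues i) : ℂ)) * Uᴴ *
        (U * diagonal (fun i => (g (hA.eigenvalues i) : ℂ)) * Uᴴ)
      = U * (diagonal (fun i => (f (hA.eigenvalues i) : ℂ)) * (Uᴴ * U) *
          diagonal (fun i => (g (hA.eigenvalues i) : ℂ))) * Uᴴ := by
        simp only [Matrix.mul_assoc]
    _ = U * diagonal (fun i => (f (hA.eigenvalues i) * g (hA.eigenvalues i) : ℂ)) * Uᴴ := by
        rw [star_mul_eigUnit hA, Matrix.mul_one, diagonal_mul_diagonal]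
    _ = _ := by push_cast; rfl

lemma hermFun_isHermitian (hA : A.IsHermitian) (f : ℝ → ℝ) :
    (hermFun f A).IsHermitian := by
  rw [hermFun_def hA]
  unfold Matrix.IsHermitian
  simp only [conjTranspose_mul, conjTranspose_conjTranspose, diagonal_conjTranspose,
    Matrix.mul_assoc]
  congr 2
  ext i
  simp [Pi.star_def]

lemma hermFun_congr (hA : A.IsHermitian) {f g : ℝ → ℝ}
    (h : ∀ i, f (hA.eigenvalues i) = g (hA.eigenvalues i)) :
    hermFun f A = hermFun g A := by
  rw [hermFun_def hA, hermFun_def hA]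
  have : (fun i => (f (hA.eigenvalues i) : ℂ)) = fun i => (g (hA.eigenvalues i) : ℂ) := by
    funext i; rw [h i]
  rw [this]

lemma hermFun_one (hA : A.IsHermitian) :
    hermFun (fun _ => 1) A = 1 := by
  rw [hermFun_def hA]
  simp only [Complex.ofReal_one, diagonal_one, Matrix.mul_one]
  exact eigUnit_mul_star hA

lemma hermFun_id (hA : A.IsHermitian) :
    hermFun (fun x => x) A = A := by
  rw [hermFun_def hA]
  have hs := hA.spectral_theorem
  rw [Unitary.conjStarAlgAut_apply, Matrix.star_eq_conjTranspose] at hs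
  exact hs.symm

lemma hermFun_posSemidef (hA : A.IsHermitian) {f : ℝ → ℝ}
    (hf : ∀ i, 0 ≤ f (hA.eigenvalues i)) :
    (hermFun f A).PosSemidef := by
  rw [hermFun_def hA]
  exact (Matrix.PosSemidef.diagonal (fun i => by
    exact (by exact_mod_cast hf i : (0:ℂ) ≤ (f (hA.eigenvalues i) : ℂ)))).mul_mul_conjTranspose_same _

end HermFun

noncomputable def fI : ℝ → ℝ := fun x => if x ≤ 0 then 0 else (Real.sqrt x)⁻¹
noncomputable def fQ : ℝ → ℝ := fun x => Real.sqrt (Real.sqrt x)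
noncomputable def fQi : ℝ → ℝ := fun x => if x ≤ 0 then 0 else (Real.sqrt (Real.sqrt x))⁻¹

section PDfacts
variable {m : Type*} [Fintype m] [DecidableEq m] {A : Matrix m m ℂ}

lemma pinvSqrt_eq (A : Matrix m m ℂ) : pinvSqrt A = hermFun fI A := rfl

lemma hermFun_mul_pd (h : A.PosDef) {f g r : ℝ → ℝ}
    (hfg : ∀ x, 0 < x → f x * g x = r x) :
    hermFun f A * hermFun g A = hermFun r A := by
  rw [hermFun_mul h.1]
  exact hermFun_congr h.1 (fun i => hfg _ (h.eigenvalues_pos i))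

lemma hermFun_eq_one_pd (h : A.PosDef) {f : ℝ → ℝ} (hf : ∀ x, 0 < x → f x = 1) :
    hermFun f A = 1 := by
  rw [hermFun_congr h.1 (g := fun _ => 1) (fun i => hf _ (h.eigenvalues_pos i)),
    hermFun_one h.1]

-- scalar facts
lemma fI_sqrt {x : ℝ} (hx : 0 < x) : fI x * Real.sqrt x = 1 := by
  simp only [fI, if_neg (not_le.2 hx)]
  exact inv_mul_cancel₀ (ne_of_gt (Real.sqrt_pos.2 hx))

lemma sqrt_fI {x : ℝ} (hx : 0 < x) : Real.sqrt x * fI x = 1 := by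
  rw [mul_comm]; exact fI_sqrt hx

lemma pinvSqrt_mul_sqrt (h : A.PosDef) : pinvSqrt A * hermFun Real.sqrt A = 1 := by
  rw [pinvSqrt_eq, hermFun_mul_pd h (r := fun _ => 1) (fun x hx => fI_sqrt hx)]
  exact hermFun_eq_one_pd h (fun _ _ => rfl)

lemma sqrt_mul_pinvSqrt (h : A.PosDef) : hermFun Real.sqrt A * pinvSqrt A = 1 := by
  rw [pinvSqrt_eq, hermFun_mul_pd h (r := fun _ => 1) (fun x hx => sqrt_fI hx)]
  exact hermFun_eq_one_pd h (fun _ _ => rfl)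

lemma pinvSqrt_conj (h : A.PosDef) : pinvSqrt A * A * pinvSqrt A = 1 := by
  rw [pinvSqrt_eq,
    show hermFun fI A * A = hermFun fI A * hermFun (fun x => x) A by rw [hermFun_id h.1],
    hermFun_mul_pd h (r := fun x => Real.sqrt x)
    (fun x hx => by
      simp only [fI, if_neg (not_le.2 hx)]
      rw [inv_mul_eq_div, div_eq_iff (ne_of_gt (Real.sqrt_pos.2 hx)),
        Real.mul_self_sqrt hx.le]),
    hermFun_mul_pd h (r := fun _ => 1) (fun x hx => sqrt_fI hx)]
  exact hermFun_eq_one_pd h (fun _ _ => rfl)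

lemma quarter_mul_quarter (hA : A.IsHermitian) :
    hermFun fQ A * hermFun fQ A = hermFun Real.sqrt A := by
  rw [hermFun_mul hA]
  exact hermFun_congr hA (fun i => Real.mul_self_sqrt (Real.sqrt_nonneg _))

lemma quarterInv_mul_quarterInv (h : A.PosDef) :
    hermFun fQi A * hermFun fQi A = pinvSqrt A := by
  rw [pinvSqrt_eq]
  refine hermFun_mul_pd h (fun x hx => ?_)
  simp only [fQi, fI, if_neg (not_le.2 hx)]
  rw [← mul_inv]
  rw [Real.mul_self_sqrt (Real.sqrt_nonneg _)]

lemma quarter_mul_quarterInv (h : A.PosDef) :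
    hermFun fQ A * hermFun fQi A = 1 := by
  rw [hermFun_mul_pd h (r := fun _ => 1) (fun x hx => by
    simp only [fQ, fQi, if_neg (not_le.2 hx)]
    exact mul_inv_cancel₀ (ne_of_gt (Real.sqrt_pos.2 (Real.sqrt_pos.2 hx))))]
  exact hermFun_eq_one_pd h (fun _ _ => rfl)

lemma quarterInv_mul_quarter (h : A.PosDef) :
    hermFun fQi A * hermFun fQ A = 1 := by
  rw [hermFun_mul_pd h (r := fun _ => 1) (fun x hx => by
    simp only [fQ, fQi, if_neg (not_le.2 hx)]
    exact inv_mul_cancel₀ (ne_of_gt (Real.sqrt_pos.2 (Real.sqrt_pos.2 hx))))]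
  exact hermFun_eq_one_pd h (fun _ _ => rfl)

lemma quarter_mul_pinvSqrt (h : A.PosDef) :
    hermFun fQ A * pinvSqrt A = hermFun fQi A := by
  rw [pinvSqrt_eq]
  refine hermFun_mul_pd h (fun x hx => ?_)
  have h4 : (0:ℝ) < Real.sqrt (Real.sqrt x) := Real.sqrt_pos.2 (Real.sqrt_pos.2 hx)
  simp only [fQ, fQi, fI, if_neg (not_le.2 hx)]
  rw [← Real.mul_self_sqrt (Real.sqrt_nonneg x), mul_inv]
  field_simp
  rw [Real.sqrt_sq h4.le]

lemma posSemidef_trace_nonneg {P : Matrix m m ℂ} (hP : P.PosSemidef) :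
    0 ≤ P.trace := by
  refine Finset.sum_nonneg fun i _ => ?_
  simpa [Matrix.mulVec_single, dotProduct, Pi.single_apply, Finset.sum_ite_eq] using
    hP.dotProduct_mulVec_nonneg (Pi.single i 1)

lemma trace_quad_nonneg {V R : Matrix m m ℂ} (hV : V.IsHermitian) (hR : R.IsHermitian) :
    0 ≤ (V * (R * R) * V * (R * R)).trace := by
  have key : (V * (R * R) * V * (R * R)).trace = ((R*V*R)ᴴ * (R*V*R)).trace := by
    have hM : (R*V*R)ᴴ = R*V*R := by
      simp only [conjTranspose_mul, hV.eq, hR.eq, Matrix.mul_assoc]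
    rw [hM]
    rw [show V * (R * R) * V * (R * R) = (V*R*R*V*R)*R by noncomm_ring,
      trace_mul_comm, show R * (V*R*R*V*R) = (R*V*R)*(R*V*R) by noncomm_ring]
  rw [key]
  exact posSemidef_trace_nonneg (posSemidef_conjTranspose_mul_self _)

end PDfacts

section Kron
variable {q : Type*} [Fintype q] [DecidableEq q]

/-- vectorization of a matrix -/
def mvec (M : Matrix q q ℂ) : q × q → ℂ := fun x => M x.1 x.2

lemma mvec_eq_zero_iff {M : Matrix q q ℂ} : mvec M = 0 ↔ M = 0 := by
  constructor
  · intro h; ext i j; exact congrFun h (i, j)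
  · intro h; subst h; rfl

lemma kron_mulVec (A B M : Matrix q q ℂ) :
    (A ⊗ₖ B) *ᵥ mvec M = mvec (A * M * Bᵀ) := by
  funext x
  obtain ⟨i, j⟩ := x
  simp only [Matrix.mulVec, dotProduct, Fintype.sum_prod_type, kroneckerMap_apply, mvec,
    Matrix.mul_apply, Finset.sum_mul, transpose_apply]
  rw [Finset.sum_comm]
  refine Finset.sum_congr rfl fun k _ => ?_
  refine Finset.sum_congr rfl fun l _ => ?_
  ring

lemma dv (V M : Matrix q q ℂ) :
    star (mvec V) ⬝ᵥ mvec M = (Vᴴ * M).trace := by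
  simp only [dotProduct, Fintype.sum_prod_type, Matrix.trace, Matrix.diag, Matrix.mul_apply,
    mvec, Pi.star_apply, conjTranspose_apply, star, RingHom.coe_coe]
  rw [Finset.sum_comm]

lemma kron_conjT (A B : Matrix q q ℂ) : (A ⊗ₖ B)ᴴ = Aᴴ ⊗ₖ Bᴴ := by
  ext ⟨a, b⟩ ⟨c, d⟩
  simp [kroneckerMap_apply, conjTranspose_apply, mul_comm]

lemma kron_isHermitian {A B : Matrix q q ℂ} (hA : A.IsHermitian) (hB : B.IsHermitian) :
    (A ⊗ₖ B).IsHermitian := by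
  unfold Matrix.IsHermitian
  rw [kron_conjT, hA.eq, hB.eq]

lemma sum_kron {ι : Type*} [Fintype ι] (c : ι → ℝ) (N : ι → Matrix q q ℂ)
    (B : Matrix q q ℂ) :
    (∑ i, c i • N i) ⊗ₖ B = ∑ i, c i • (N i ⊗ₖ B) := by
  ext ⟨a, b⟩ ⟨c', d⟩
  simp only [kroneckerMap_apply, Matrix.sum_apply, Finset.sum_mul, Matrix.smul_apply,
    smul_eq_mul, Complex.real_smul]
  exact Finset.sum_congr rfl fun i _ => by ring

lemma kron_sum {ι : Type*} [Fintype ι] (c : ι → ℝ) (N : ι → Matrix q q ℂ)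
    (B : Matrix q q ℂ) :
    B ⊗ₖ (∑ i, c i • N i) = ∑ i, c i • (B ⊗ₖ N i) := by
  ext ⟨a, b⟩ ⟨c', d⟩
  simp only [kroneckerMap_apply, Matrix.sum_apply, Finset.mul_sum, Matrix.smul_apply,
    smul_eq_mul, Complex.real_smul]
  exact Finset.sum_congr rfl fun i _ => by ring

end Kron

section QuadForm
variable {N' : Type*} [Fintype N'] [DecidableEq N']

lemma dot_move (A : Matrix N' N' ℂ) (u w : N' → ℂ) :
    star (A *ᵥ u) ⬝ᵥ w = star u ⬝ᵥ (Aᴴ *ᵥ w) := by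
  rw [star_mulVec, ← dotProduct_mulVec]

lemma key1 {A B : Matrix N' N' ℂ} (hA : A.IsHermitian) (hB : B.IsHermitian)
    (u v : N' → ℂ) :
    star u ⬝ᵥ ((A * B) *ᵥ v) + star v ⬝ᵥ ((B * A) *ᵥ u)
      ≤ star u ⬝ᵥ ((A * A) *ᵥ u) + star v ⬝ᵥ ((B * B) *ᵥ v) := by
  have h0 := dotProduct_star_self_nonneg (A *ᵥ u - B *ᵥ v)
  have hexp : star (A *ᵥ u - B *ᵥ v) ⬝ᵥ (A *ᵥ u - B *ᵥ v)
      = (star u ⬝ᵥ ((A * A) *ᵥ u) + star v ⬝ᵥ ((B * B) *ᵥ v))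
        - (star u ⬝ᵥ ((A * B) *ᵥ v) + star v ⬝ᵥ ((B * A) *ᵥ u)) := by
    rw [star_sub, sub_dotProduct, dotProduct_sub, dotProduct_sub,
      dot_move A u, dot_move A u, dot_move B v, dot_move B v,
      mulVec_mulVec, mulVec_mulVec, mulVec_mulVec, mulVec_mulVec, hA.eq, hB.eq]
    ring
  rw [hexp] at h0
  exact sub_nonneg.mp h0

lemma dot_move' (A : Matrix N' N' ℂ) (u w : N' → ℂ) :
    star u ⬝ᵥ (A *ᵥ w) = star (Aᴴ *ᵥ u) ⬝ᵥ w := by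
  rw [dot_move, conjTranspose_conjTranspose]

lemma quad_le_of_eigenvalues_le {E : Matrix N' N' ℂ} (hE : E.IsHermitian)
    (hev : ∀ k, hE.eigenvalues k ≤ 1) (y : N' → ℂ) :
    star y ⬝ᵥ (E *ᵥ y) ≤ star y ⬝ᵥ y := by
  have hspec := hE.spectral_theorem
  rw [Unitary.conjStarAlgAut_apply, Matrix.star_eq_conjTranspose] at hspec
  set U := (hE.eigenvectorUnitary : Matrix N' N' ℂ) with hU
  set D : Matrix N' N' ℂ := diagonal (RCLike.ofReal ∘ hE.eigenvalues) with hD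
  set z := Uᴴ *ᵥ y with hz
  have hmove : star y ⬝ᵥ (E *ᵥ y) = star z ⬝ᵥ (D *ᵥ z) := by
    rw [hspec, ← mulVec_mulVec, ← mulVec_mulVec, dot_move', hz]
  have hzy : star z ⬝ᵥ z = star y ⬝ᵥ y := by
    rw [hz, dot_move, conjTranspose_conjTranspose, mulVec_mulVec,
      eigUnit_mul_star hE, one_mulVec]
  rw [hmove, ← hzy, hD]
  simp only [dotProduct, mulVec_diagonal, Pi.star_apply]
  refine Finset.sum_le_sum fun k _ => ?_
  have h1 : star (z k) * z k = (Complex.normSq (z k) : ℂ) := by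
    rw [mul_comm]; exact Complex.mul_conj (z k)
  have h0 : (0:ℂ) ≤ star (z k) * z k := by
    rw [h1]; exact Complex.zero_le_real.2 (Complex.normSq_nonneg _)
  calc star (z k) * ((hE.eigenvalues k : ℂ) * z k)
      = (hE.eigenvalues k : ℂ) * (star (z k) * z k) := by ring
    _ ≤ 1 * (star (z k) * z k) :=
        mul_le_mul_of_nonneg_right (Complex.real_le_real.2 (hev k)) h0
    _ = star (z k) * z k := one_mul _

end QuadForm

section Helpers
variable {q : Type*} [Fintype q] [DecidableEq q]

lemma quad_sum {ι : Type*} (s : Finset ι) (c : ι → ℝ) (M : ι → Matrix q q ℂ) (u v : q → ℂ) :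
    star u ⬝ᵥ ((∑ i ∈ s, c i • M i) *ᵥ v) = ∑ i ∈ s, (c i : ℂ) * (star u ⬝ᵥ (M i *ᵥ v)) := by
  classical
  induction s using Finset.induction with
  | empty => simp
  | insert _ _ h ih =>
    rw [Finset.sum_insert h, Finset.sum_insert h, Matrix.add_mulVec, dotProduct_add, ih,
      smul_mulVec, dotProduct_smul, Complex.real_smul]

lemma sqrt_mul_sqrt_pd {A : Matrix q q ℂ} (h : A.PosDef) :
    hermFun Real.sqrt A * hermFun Real.sqrt A = A := by
  rw [hermFun_mul_pd h (r := fun x => x) (fun x hx => Real.mul_self_sqrt hx.le),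
    hermFun_id h.1]

lemma isHermitian_sum_smul {ι : Type*} [Fintype ι] (c : ι → ℝ) (M : ι → Matrix q q ℂ)
    (hM : ∀ i, (M i).IsHermitian) : (∑ i, c i • M i).IsHermitian := by
  unfold Matrix.IsHermitian
  rw [conjTranspose_sum]
  exact Finset.sum_congr rfl fun i _ => by
    rw [conjTranspose_smul, star_trivial, (hM i).eq]

end Helpers

section Step1
variable {q : Type*} [Fintype q] [DecidableEq q]

lemma step1 {A ρA W : Matrix q q ℂ} (hA : A.PosDef) (hρA : ρA.IsHermitian)
    (hW : W.IsHermitian) :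
    (ρA * W).trace + (W * ρA).trace
        - (W * hermFun Real.sqrt A * W * hermFun Real.sqrt A).trace
      ≤ (pinvSqrt A * ρA * pinvSqrt A * ρA).trace := by
  set S := hermFun Real.sqrt A with hSdef
  set T := pinvSqrt A with hTdef
  set R := hermFun fQ A with hRdef
  have hTH : T.IsHermitian := hermFun_isHermitian hA.1 _
  have hRH : R.IsHermitian := hermFun_isHermitian hA.1 _
  have hTS : T * S = 1 := pinvSqrt_mul_sqrt hA
  have hST : S * T = 1 := sqrt_mul_pinvSqrt hA
  have hRR : R * R = S := quarter_mul_quarter hA.1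
  set V := T * ρA * T - W with hVdef
  have hVH : V.IsHermitian := by
    unfold Matrix.IsHermitian
    rw [hVdef, conjTranspose_sub]
    simp only [conjTranspose_mul, hTH.eq, hρA.eq, hW.eq, Matrix.mul_assoc]
  have h0 : 0 ≤ (V * (R * R) * V * (R * R)).trace := trace_quad_nonneg hVH hRH
  rw [hRR] at h0
  -- expand
  set X := T * ρA with hXdef
  set Y := W * S with hYdef
  have eVS : V * S = X - Y := by
    rw [hVdef, Matrix.sub_mul, Matrix.mul_assoc, hTS, Matrix.mul_one, hXdef, hYdef]
  have eassoc : V * S * V * S = (V * S) * (V * S) := by noncomm_ring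
  have hexp : (V * S * V * S).trace
      = (X*X).trace - (X*Y).trace - (Y*X).trace + (Y*Y).trace := by
    rw [eassoc, eVS, show (X - Y) * (X - Y) = X*X - X*Y - Y*X + Y*Y from by noncomm_ring,
      trace_add, trace_sub, trace_sub]
  have t1 : (X*Y).trace = (ρA * W).trace := by
    rw [hXdef, hYdef, show T * ρA * (W * S) = T * (ρA * W * S) from by noncomm_ring,
      trace_mul_comm, show ρA * W * S * T = ρA * W * (S * T) from by noncomm_ring,
      hST, Matrix.mul_one]
  have t2 : (Y*X).trace = (W * ρA).trace := by
    rw [hXdef, hYdef, show W * S * (T * ρA) = W * (S * T) * ρA from by noncomm_ring,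
      hST, Matrix.mul_one]
  have t3 : (X*X).trace = (T * ρA * T * ρA).trace := by
    rw [hXdef, show T * ρA * (T * ρA) = T * ρA * T * ρA from by noncomm_ring]
  have t4 : (Y*Y).trace = (W * S * W * S).trace := by
    rw [hYdef, show W * S * (W * S) = W * S * W * S from by noncomm_ring]
  rw [hexp, t1, t2, t3, t4] at h0
  have := sub_nonneg.mp (by
    calc (0:ℂ) ≤ (T * ρA * T * ρA).trace - (ρA * W).trace - (W * ρA).trace
        + (W * S * W * S).trace := h0
      _ = (T * ρA * T * ρA).trace
          - ((ρA * W).trace + (W * ρA).trace - (W * S * W * S).trace) := by ring)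
  exact this

end Step1

section Concavity
variable {n : ℕ}

set_option maxHeartbeats 2000000 in
lemma concavity {ι : Type*} [Fintype ι] (p : ι → ℝ) (hp : ∀ i, 0 ≤ p i)
    (σᵢ : ι → Matrix (Fin n) (Fin n) ℂ) (hσi : ∀ i, (σᵢ i).PosDef)
    {σ : Matrix (Fin n) (Fin n) ℂ} (hσdef : σ = ∑ i, p i • σᵢ i) (hσpd : σ.PosDef)
    {W : Matrix (Fin n) (Fin n) ℂ} (hW : W.IsHermitian) :
    ∑ i, (p i : ℂ) * (W * hermFun Real.sqrt (σᵢ i) * W * hermFun Real.sqrt (σᵢ i)).trace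
      ≤ (W * hermFun Real.sqrt σ * W * hermFun Real.sqrt σ).trace := by
  set S := hermFun Real.sqrt σ with hSdef
  set T := pinvSqrt σ with hTdef
  set R4 := hermFun fQ σ with hR4def
  set Ri4 := hermFun fQi σ with hRi4def
  set Si : ι → Matrix (Fin n) (Fin n) ℂ := fun i => hermFun Real.sqrt (σᵢ i) with hSidef
  have hSH : S.IsHermitian := hermFun_isHermitian hσpd.1 _
  have hTH : T.IsHermitian := hermFun_isHermitian hσpd.1 _
  have hR4H : R4.IsHermitian := hermFun_isHermitian hσpd.1 _
  have hRi4H : Ri4.IsHermitian := hermFun_isHermitian hσpd.1 _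
  have hSiH : ∀ i, (Si i).IsHermitian := fun i => hermFun_isHermitian (hσi i).1 _
  -- scalar identities
  have hTσT : T * σ * T = 1 := pinvSqrt_conj hσpd
  have hR4T : R4 * T = Ri4 := quarter_mul_pinvSqrt hσpd
  have hR4Ri4 : R4 * Ri4 = 1 := quarter_mul_quarterInv hσpd
  have hRi4R4 : Ri4 * R4 = 1 := quarterInv_mul_quarter hσpd
  have hR4R4 : R4 * R4 = S := quarter_mul_quarter hσpd.1
  have hSiSi : ∀ i, Si i * Si i = σᵢ i := fun i => sqrt_mul_sqrt_pd (hσi i)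
  -- Kronecker gadgets
  set Γ : ι → Matrix (Fin n × Fin n) (Fin n × Fin n) ℂ :=
    fun i => Si i ⊗ₖ (Si i)ᵀ with hΓdef
  set Z := ∑ i, p i • Γ i with hZdef
  set Th := T ⊗ₖ (1 : Matrix (Fin n) (Fin n) ℂ) with hThdef
  set Tv := (1 : Matrix (Fin n) (Fin n) ℂ) ⊗ₖ Tᵀ with hTvdef
  set K := Th * Z * Tv with hKdef
  set P := R4 ⊗ₖ R4ᵀ with hPdef
  set Pi' := Ri4 ⊗ₖ Ri4ᵀ with hPidef
  set Cm := R4 ⊗ₖ Ri4ᵀ with hCmdef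
  set Ci := Ri4 ⊗ₖ R4ᵀ with hCidef
  set E := Pi' * Z * Pi' with hEdef
  set D := S ⊗ₖ Sᵀ with hDdef
  set w := mvec W with hwdef
  have hZH : Z.IsHermitian :=
    isHermitian_sum_smul p Γ (fun i => kron_isHermitian (hSiH i) (hSiH i).transpose)
  have hThH : Th.IsHermitian := kron_isHermitian hTH isHermitian_one
  have hTvH : Tv.IsHermitian := kron_isHermitian isHermitian_one hTH.transpose
  have hPH : P.IsHermitian := kron_isHermitian hR4H hR4H.transpose
  have hPiH : Pi'.IsHermitian := kron_isHermitian hRi4H hRi4H.transpose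
  -- Kronecker products
  have hThXTh : Th * (σ ⊗ₖ (1 : Matrix (Fin n) (Fin n) ℂ)) * Th = 1 := by
    rw [hThdef, ← mul_kronecker_mul, ← mul_kronecker_mul, hTσT]
    simp [Matrix.one_kronecker_one]
  have hTt : Tᵀ * σᵀ * Tᵀ = 1 := by
    have h := congrArg Matrix.transpose hTσT
    rwa [transpose_mul, transpose_mul, transpose_one, ← Matrix.mul_assoc] at h
  have hTvYTv : Tv * ((1 : Matrix (Fin n) (Fin n) ℂ) ⊗ₖ σᵀ) * Tv = 1 := by
    rw [hTvdef, ← mul_kronecker_mul, ← mul_kronecker_mul, hTt]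
    simp [Matrix.one_kronecker_one]
  have hCmTh : Cm * Th = Pi' := by
    rw [hCmdef, hThdef, ← mul_kronecker_mul, hR4T, Matrix.mul_one, hPidef]
  have hTvCi : Tv * Ci = Pi' := by
    rw [hTvdef, hCidef, ← mul_kronecker_mul, Matrix.one_mul, hPidef]
    congr 1
    rw [← transpose_mul, hR4T]
  have hCmCi : Cm * Ci = 1 := by
    rw [hCmdef, hCidef, ← mul_kronecker_mul, hR4Ri4, ← transpose_mul, hR4Ri4,
      transpose_one, Matrix.one_kronecker_one]
  have hCiCm : Ci * Cm = 1 := by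
    rw [hCidef, hCmdef, ← mul_kronecker_mul, hRi4R4, ← transpose_mul, hRi4R4,
      transpose_one, Matrix.one_kronecker_one]
  have hPPi : P * Pi' = 1 := by
    rw [hPdef, hPidef, ← mul_kronecker_mul, hR4Ri4, ← transpose_mul, hRi4R4,
      transpose_one, Matrix.one_kronecker_one]
  have hPiP : Pi' * P = 1 := by
    rw [hPidef, hPdef, ← mul_kronecker_mul, hRi4R4, ← transpose_mul, hR4Ri4,
      transpose_one, Matrix.one_kronecker_one]
  have hPP : P * P = D := by
    rw [hPdef, hDdef, ← mul_kronecker_mul, hR4R4, ← transpose_mul, hR4R4]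
  -- (c1) : summed block positivity
  have c1 : ∀ u v : (Fin n × Fin n) → ℂ,
      star u ⬝ᵥ (Z *ᵥ v) + star v ⬝ᵥ (Z *ᵥ u)
        ≤ star u ⬝ᵥ ((σ ⊗ₖ (1 : Matrix (Fin n) (Fin n) ℂ)) *ᵥ u)
          + star v ⬝ᵥ (((1 : Matrix (Fin n) (Fin n) ℂ) ⊗ₖ σᵀ) *ᵥ v) := by
    intro u v
    have hXsum : σ ⊗ₖ (1 : Matrix (Fin n) (Fin n) ℂ) = ∑ i, p i • (σᵢ i ⊗ₖ 1) := by
      rw [hσdef]; exact sum_kron p σᵢ 1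
    have hYsum : (1 : Matrix (Fin n) (Fin n) ℂ) ⊗ₖ σᵀ = ∑ i, p i • (1 ⊗ₖ (σᵢ i)ᵀ) := by
      rw [hσdef, transpose_sum]
      rw [show (fun i => (p i • σᵢ i)ᵀ) = fun i => p i • (σᵢ i)ᵀ from
        funext fun i => transpose_smul _ _]
      exact kron_sum p _ 1
    rw [hXsum, hYsum, hZdef, quad_sum, quad_sum, quad_sum, quad_sum,
      ← Finset.sum_add_distrib, ← Finset.sum_add_distrib]
    refine Finset.sum_le_sum fun i _ => ?_
    rw [← mul_add, ← mul_add]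
    refine mul_le_mul_of_nonneg_left ?_ (Complex.zero_le_real.2 (hp i))
    have hk := key1 (kron_isHermitian (hSiH i) isHermitian_one)
      (kron_isHermitian isHermitian_one (hSiH i).transpose) u v
    rw [← mul_kronecker_mul, ← mul_kronecker_mul, ← mul_kronecker_mul,
      ← mul_kronecker_mul] at hk
    simp only [Matrix.mul_one, Matrix.one_mul, hSiSi i, ← transpose_mul] at hk
    exact hk
  -- (c2) : K is a contraction
  have c2 : ∀ x : (Fin n × Fin n) → ℂ,
      star (K *ᵥ x) ⬝ᵥ (K *ᵥ x) ≤ star x ⬝ᵥ x := by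
    intro x
    have h := c1 (Th *ᵥ (K *ᵥ x)) (Tv *ᵥ x)
    have hKH : Tv * Z * Th = Kᴴ := by
      rw [hKdef]
      simp only [conjTranspose_mul, hThH.eq, hTvH.eq, hZH.eq, Matrix.mul_assoc]
    have e1 : star (Th *ᵥ (K *ᵥ x)) ⬝ᵥ (Z *ᵥ (Tv *ᵥ x))
        = star (K *ᵥ x) ⬝ᵥ (K *ᵥ x) := by
      rw [dot_move Th, hThH.eq, mulVec_mulVec, mulVec_mulVec, ← hKdef]
    have e2 : star (Tv *ᵥ x) ⬝ᵥ (Z *ᵥ (Th *ᵥ (K *ᵥ x)))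
        = star (K *ᵥ x) ⬝ᵥ (K *ᵥ x) := by
      rw [dot_move Tv, hTvH.eq, mulVec_mulVec, mulVec_mulVec, hKH, dot_move',
        conjTranspose_conjTranspose]
    have e3 : star (Th *ᵥ (K *ᵥ x)) ⬝ᵥ ((σ ⊗ₖ (1 : Matrix (Fin n) (Fin n) ℂ)) *ᵥ (Th *ᵥ (K *ᵥ x)))
        = star (K *ᵥ x) ⬝ᵥ (K *ᵥ x) := by
      rw [dot_move Th, hThH.eq, mulVec_mulVec, mulVec_mulVec, hThXTh, one_mulVec]
    have e4 : star (Tv *ᵥ x) ⬝ᵥ (((1 : Matrix (Fin n) (Fin n) ℂ) ⊗ₖ σᵀ) *ᵥ (Tv *ᵥ x))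
        = star x ⬝ᵥ x := by
      rw [dot_move Tv, hTvH.eq, mulVec_mulVec, mulVec_mulVec, hTvYTv, one_mulVec]
    rw [e1, e2, e3, e4] at h
    exact (add_le_add_iff_left _).mp h
  -- E hermitian
  have hEH : E.IsHermitian := by
    have : E = Pi'ᴴ * Z * Pi' := by rw [hPiH.eq, hEdef]
    rw [this]
    exact isHermitian_conjTranspose_mul_mul _ hZH
  -- (c4) : eigenvalues of E are at most 1
  have c4 : ∀ k, hEH.eigenvalues k ≤ 1 := by
    intro k
    have he := hEH.mulVec_eigenvectorBasis k
    set lam := hEH.eigenvalues k with hlam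
    set e : (Fin n × Fin n) → ℂ := ⇑(hEH.eigenvectorBasis k) with hedef
    have hene : e ≠ 0 := by
      intro h
      exact hEH.eigenvectorBasis.orthonormal.ne_zero k (by rw [hedef] at h; simpa using h)
    have hE_CKCi : E = Cm * K * Ci := by
      rw [hKdef, show Cm * (Th * Z * Tv) * Ci = (Cm * Th) * Z * (Tv * Ci) from by
        noncomm_ring, hCmTh, hTvCi, hEdef]
    have hKCi : K * Ci = Ci * E := by
      rw [hE_CKCi, show Ci * (Cm * K * Ci) = (Ci * Cm) * (K * Ci) from by noncomm_ring,
        hCiCm, Matrix.one_mul]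
    have hsm : (lam • e : (Fin n × Fin n) → ℂ) = (lam : ℂ) • e := by
      funext j; simp [Pi.smul_apply, Complex.real_smul]
    have hy : K *ᵥ (Ci *ᵥ e) = (lam : ℂ) • (Ci *ᵥ e) := by
      rw [mulVec_mulVec, hKCi, ← mulVec_mulVec, he, hsm, mulVec_smul]
    have hyne : Ci *ᵥ e ≠ 0 := by
      intro h
      apply hene
      have h2 : Cm *ᵥ (Ci *ᵥ e) = e := by rw [mulVec_mulVec, hCmCi, one_mulVec]
      rw [h, mulVec_zero] at h2
      exact h2.symm
    have hc2y := c2 (Ci *ᵥ e)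
    rw [hy] at hc2y
    have hmm : star ((lam : ℂ) • (Ci *ᵥ e)) ⬝ᵥ ((lam : ℂ) • (Ci *ᵥ e))
        = ((lam : ℂ) * (lam : ℂ)) * (star (Ci *ᵥ e) ⬝ᵥ (Ci *ᵥ e)) := by
      rw [star_smul, smul_dotProduct, dotProduct_smul]
      simp only [smul_eq_mul, RCLike.star_def, Complex.conj_ofReal]
      ring
    rw [hmm] at hc2y
    have hpos : 0 < star (Ci *ᵥ e) ⬝ᵥ (Ci *ᵥ e) :=
      Matrix.dotProduct_star_self_pos_iff.mpr hyne
    obtain ⟨hre, him⟩ := Complex.pos_iff.mp hpos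
    have hle := (Complex.le_def.mp hc2y).1
    set s := star (Ci *ᵥ e) ⬝ᵥ (Ci *ᵥ e) with hs
    have : lam * lam * s.re ≤ s.re := by
      have : ((lam : ℂ) * (lam : ℂ) * s).re = lam * lam * s.re := by
        simp [Complex.mul_re, ← him]
      rw [this] at hle
      exact hle
    have h2 : lam * lam ≤ 1 := by nlinarith [this, hre]
    nlinarith [sq_nonneg (lam - 1), h2]
  -- (c5)-(c6) : conclude
  have hq := quad_le_of_eigenvalues_le hEH c4 (P *ᵥ w)
  have hZPEP : P * E * P = Z := by
    rw [hEdef, show P * (Pi' * Z * Pi') * P = (P * Pi') * Z * (Pi' * P) from by noncomm_ring,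
      hPPi, hPiP, Matrix.one_mul, Matrix.mul_one]
  have hL : star (P *ᵥ w) ⬝ᵥ (E *ᵥ (P *ᵥ w)) = star w ⬝ᵥ (Z *ᵥ w) := by
    rw [dot_move P, hPH.eq, mulVec_mulVec, mulVec_mulVec,
      hZPEP]
  have hR : star (P *ᵥ w) ⬝ᵥ (P *ᵥ w) = star w ⬝ᵥ (D *ᵥ w) := by
    rw [dot_move P, hPH.eq, mulVec_mulVec, hPP]
  rw [hL, hR] at hq
  -- translate traces
  have hΓtr : ∀ i, star w ⬝ᵥ (Γ i *ᵥ w) = (W * Si i * W * Si i).trace := by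
    intro i
    rw [hΓdef, hwdef]
    rw [kron_mulVec, dv, transpose_transpose, hW.eq,
      show W * (Si i * W * Si i) = W * Si i * W * Si i from by noncomm_ring]
  have hDtr : star w ⬝ᵥ (D *ᵥ w) = (W * S * W * S).trace := by
    rw [hDdef, hwdef, kron_mulVec, dv, transpose_transpose, hW.eq,
      show W * (S * W * S) = W * S * W * S from by noncomm_ring]
  have hZtr : star w ⬝ᵥ (Z *ᵥ w) = ∑ i, (p i : ℂ) * (W * Si i * W * Si i).trace := by
    rw [hZdef, quad_sum]
    exact Finset.sum_congr rfl fun i _ => by rw [hΓtr i]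
  rw [hZtr, hDtr] at hq
  exact hq

end Concavity

set_option maxHeartbeats 1000000

/-- Joint convexity of the exponential of the collision relative entropy:
for `ρ = ∑ᵢ pᵢ ρᵢ` and `σ = ∑ᵢ pᵢ σᵢ`,
`tr(σ^{-1/2} ρ σ^{-1/2} ρ) ≤ ∑ᵢ pᵢ tr(σᵢ^{-1/2} ρᵢ σᵢ^{-1/2} ρᵢ)`. -/
theorem stmt18 (n : ℕ) (ι : Type*) [Fintype ι]
    (p : ι → ℝ) (hp : ∀ i, 0 ≤ p i) (hp1 : ∑ i, p i = 1)
    (ρᵢ σᵢ : ι → Matrix (Fin n) (Fin n) ℂ)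
    (hρ : ∀ i, (ρᵢ i).PosSemidef) (hσ : ∀ i, (σᵢ i).PosDef) :
    (((pinvSqrt (∑ i, p i • σᵢ i)) * (∑ i, p i • ρᵢ i) *
        (pinvSqrt (∑ i, p i • σᵢ i)) * (∑ i, p i • ρᵢ i)).trace).re
      ≤ ∑ i, p i *
          ((pinvSqrt (σᵢ i) * ρᵢ i * pinvSqrt (σᵢ i) * ρᵢ i).trace).re := by
  classical
  set ρ := ∑ i, p i • ρᵢ i with hρdef
  set σ := ∑ i, p i • σᵢ i with hσdef
  have hρH : ρ.IsHermitian := isHermitian_sum_smul p ρᵢ (fun i => (hρ i).1)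
  have hσH : σ.IsHermitian := isHermitian_sum_smul p σᵢ (fun i => (hσ i).1)
  obtain ⟨j, hj⟩ : ∃ j, 0 < p j := by
    by_contra h
    push_neg at h
    have h0 : (∑ i, p i) = 0 := Finset.sum_eq_zero fun i _ => le_antisymm (h i) (hp i)
    rw [hp1] at h0
    exact one_ne_zero h0
  have hσpd : σ.PosDef := by
    refine Matrix.PosDef.of_dotProduct_mulVec_pos hσH (fun x hx => ?_)
    rw [hσdef, quad_sum]
    refine Finset.sum_pos'
      (fun i _ => mul_nonneg (Complex.zero_le_real.2 (hp i)) ((hσ i).posSemidef.dotProduct_mulVec_nonneg x))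
      ⟨j, Finset.mem_univ j, ?_⟩
    exact mul_pos (Complex.zero_lt_real.2 hj) ((hσ j).dotProduct_mulVec_pos hx)
  set S := hermFun Real.sqrt σ with hSdef
  set T := pinvSqrt σ with hTdef
  have hTH : T.IsHermitian := hermFun_isHermitian hσpd.1 _
  set W := T * ρ * T with hWdef
  have hWH : W.IsHermitian := by
    unfold Matrix.IsHermitian
    rw [hWdef]
    simp only [conjTranspose_mul, hTH.eq, hρH.eq, Matrix.mul_assoc]
  have hstep1 : ∀ i, (ρᵢ i * W).trace + (W * ρᵢ i).trace
      - (W * hermFun Real.sqrt (σᵢ i) * W * hermFun Real.sqrt (σᵢ i)).trace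
      ≤ (pinvSqrt (σᵢ i) * ρᵢ i * pinvSqrt (σᵢ i) * ρᵢ i).trace :=
    fun i => step1 (hσ i) (hρ i).1 hWH
  have hTS : T * S = 1 := pinvSqrt_mul_sqrt hσpd
  have hWS : W * S = T * ρ := by
    rw [hWdef, Matrix.mul_assoc (T * ρ) T S, hTS, Matrix.mul_one]
  have hρW : (ρ * W).trace = (T * ρ * T * ρ).trace := by
    rw [trace_mul_comm, hWdef]
  have hWρ : (W * ρ).trace = (T * ρ * T * ρ).trace := by rw [hWdef]
  have hWSWS : (W * S * W * S).trace = (T * ρ * T * ρ).trace := by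
    rw [show W * S * W * S = (W * S) * (W * S) from by noncomm_ring, hWS,
      show (T * ρ) * (T * ρ) = T * ρ * T * ρ from by noncomm_ring]
  have hconc := concavity p hp σᵢ hσ hσdef hσpd hWH
  have hsum1 : ∑ i, (p i : ℂ) * (ρᵢ i * W).trace = (ρ * W).trace := by
    rw [hρdef, Finset.sum_mul, trace_sum]
    exact Finset.sum_congr rfl fun i _ => by
      rw [smul_mul_assoc, trace_smul, Complex.real_smul]
  have hsum2 : ∑ i, (p i : ℂ) * (W * ρᵢ i).trace = (W * ρ).trace := by
    rw [hρdef, Finset.mul_sum, trace_sum]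
    exact Finset.sum_congr rfl fun i _ => by
      rw [mul_smul_comm, trace_smul, Complex.real_smul]
  have main : (T * ρ * T * ρ).trace
      ≤ ∑ i, (p i : ℂ) * (pinvSqrt (σᵢ i) * ρᵢ i * pinvSqrt (σᵢ i) * ρᵢ i).trace := by
    have h1 : ∑ i, (p i : ℂ) * ((ρᵢ i * W).trace + (W * ρᵢ i).trace
          - (W * hermFun Real.sqrt (σᵢ i) * W * hermFun Real.sqrt (σᵢ i)).trace)
        ≤ ∑ i, (p i : ℂ) * (pinvSqrt (σᵢ i) * ρᵢ i * pinvSqrt (σᵢ i) * ρᵢ i).trace :=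
      Finset.sum_le_sum fun i _ =>
        mul_le_mul_of_nonneg_left (hstep1 i) (Complex.zero_le_real.2 (hp i))
    have hexp : ∑ i, (p i : ℂ) * ((ρᵢ i * W).trace + (W * ρᵢ i).trace
          - (W * hermFun Real.sqrt (σᵢ i) * W * hermFun Real.sqrt (σᵢ i)).trace)
        = (∑ i, (p i : ℂ) * (ρᵢ i * W).trace) + (∑ i, (p i : ℂ) * (W * ρᵢ i).trace)
          - ∑ i, (p i : ℂ) * (W * hermFun Real.sqrt (σᵢ i) * W * hermFun Real.sqrt (σᵢ i)).trace := by
      rw [← Finset.sum_add_distrib, ← Finset.sum_sub_distrib]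
      exact Finset.sum_congr rfl fun i _ => by ring
    calc (T * ρ * T * ρ).trace
        = (ρ * W).trace + (W * ρ).trace - (W * S * W * S).trace := by
          rw [hρW, hWρ, hWSWS]; ring
      _ ≤ (ρ * W).trace + (W * ρ).trace
          - ∑ i, (p i : ℂ) * (W * hermFun Real.sqrt (σᵢ i) * W * hermFun Real.sqrt (σᵢ i)).trace :=
          sub_le_sub_left hconc _
      _ = ∑ i, (p i : ℂ) * ((ρᵢ i * W).trace + (W * ρᵢ i).trace
          - (W * hermFun Real.sqrt (σᵢ i) * W * hermFun Real.sqrt (σᵢ i)).trace) := by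
          rw [hexp, hsum1, hsum2]
      _ ≤ _ := h1
  have hre := (Complex.le_def.mp main).1
  refine le_trans hre (le_of_eq ?_)
  rw [Complex.re_sum]
  exact Finset.sum_congr rfl fun i _ => by simp [Complex.mul_re]
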